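/- Let G = (V,E) be a finite simple graph that is (ℓ, ε)-sparse for some real ε < 1/2 and natural number ℓ. Then for every vertex subset U ⊆ V with |U| ≤ ℓ, the induced subgraph G[U] is 3-colourable, i.e. there exists a proper colouring of G[U] with 3 colours. -/

import Mathlib

open Finset

/-- The set of edges of `G` with both endpoints in `U`. -/
def EdgesWithin {V : Type*} (G : SimpleGraph V) (U : Set V) : Set (Sym2 V) :=
  {e ∈ G.edgeSet | ∀ v ∈ e, v ∈ U}

/-- A graph is `(ℓ, ε)`-sparse if every vertex set `U` of size at most `ℓ`
spans at most `(1+ε)|U|` edges. -/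
def Sparse {V : Type*} (G : SimpleGraph V) (ℓ : ℕ) (ε : ℝ) : Prop :=
  ∀ U : Set V, U.ncard ≤ ℓ → ((EdgesWithin G U).ncard : ℝ) ≤ (1 + ε) * U.ncard

/-- The restriction of a graph to a finset of vertices. -/
private def restrictG {V : Type*} (G : SimpleGraph V) (W : Finset V) : SimpleGraph V where
  Adj a b := G.Adj a b ∧ a ∈ W ∧ b ∈ W
  symm := ⟨by rintro a b ⟨h, ha, hb⟩; exact ⟨h.symm, hb, ha⟩⟩
  loopless := ⟨by rintro a ⟨h, _⟩; exact G.loopless.irrefl a h⟩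

private lemma edgesWithin_eq {V : Type*} (G : SimpleGraph V) (W : Finset V) :
    EdgesWithin G ↑W = (restrictG G W).edgeSet := by
  ext e
  induction e using Sym2.ind with
  | _ a b =>
    simp only [EdgesWithin, Set.mem_setOf_eq, SimpleGraph.mem_edgeSet, restrictG,
      Sym2.mem_iff, Finset.mem_coe]
    constructor
    · rintro ⟨h, hv⟩
      exact ⟨h, hv a (Or.inl rfl), hv b (Or.inr rfl)⟩
    · rintro ⟨h, ha, hb⟩
      refine ⟨h, ?_⟩
      rintro v (rfl | rfl) <;> assumption

private lemma exists_low_deg {V : Type*} [Fintype V] [DecidableEq V] (G : SimpleGraph V)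
    [DecidableRel G.Adj] (W : Finset V) (hW : W.Nonempty) (ε : ℝ) (hε : ε < 1 / 2)
    (hE : ((EdgesWithin G ↑W).ncard : ℝ) ≤ (1 + ε) * W.card) :
    ∃ v ∈ W, (W.filter (G.Adj v)).card ≤ 2 := by
  classical
  by_contra hcon
  push_neg at hcon
  have hdeg : ∀ v ∈ W, 3 ≤ (W.filter (G.Adj v)).card := fun v hv => hcon v hv
  set G' := restrictG G W with hG'
  -- degrees of G'
  have hdegv : ∀ v ∈ W, G'.degree v = (W.filter (G.Adj v)).card := by
    intro v hv
    unfold SimpleGraph.degree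
    congr 1
    ext b
    simp only [SimpleGraph.mem_neighborFinset, hG', restrictG, Finset.mem_filter]
    tauto
  have hdegv0 : ∀ v, v ∉ W → G'.degree v = 0 := by
    intro v hv
    unfold SimpleGraph.degree
    rw [Finset.card_eq_zero]
    ext b
    simp [SimpleGraph.mem_neighborFinset, hG', restrictG, hv]
  have hsum : ∑ v ∈ W, (W.filter (G.Adj v)).card = 2 * G'.edgeFinset.card := by
    rw [← SimpleGraph.sum_degrees_eq_twice_card_edges]
    rw [← Finset.sum_subset (Finset.subset_univ W)
      (fun v _ hv => hdegv0 v hv)]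
    exact Finset.sum_congr rfl fun v hv => (hdegv v hv).symm
  have hcard : (EdgesWithin G ↑W).ncard = G'.edgeFinset.card := by
    rw [edgesWithin_eq, SimpleGraph.edgeFinset, Set.ncard_eq_toFinset_card']
  have h3 : 3 * W.card ≤ 2 * G'.edgeFinset.card := by
    rw [← hsum]
    calc 3 * W.card = ∑ _v ∈ W, 3 := by rw [Finset.sum_const, smul_eq_mul, mul_comm]
    _ ≤ ∑ v ∈ W, (W.filter (G.Adj v)).card := Finset.sum_le_sum hdeg
  have hR : (3 : ℝ) * W.card ≤ 2 * (1 + ε) * W.card := by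
    have := hE
    rw [hcard] at this
    have h3' : (3 : ℝ) * W.card ≤ 2 * (G'.edgeFinset.card : ℝ) := by
      exact_mod_cast h3
    nlinarith
  have hpos : (0 : ℝ) < W.card := by
    exact_mod_cast Finset.card_pos.mpr hW
  nlinarith

private lemma greedy {V : Type*} [DecidableEq V] (G : SimpleGraph V) [DecidableRel G.Adj] :
    ∀ (n : ℕ) (W : Finset V), W.card ≤ n →
    (∀ W' ⊆ W, W'.Nonempty → ∃ v ∈ W', (W'.filter (G.Adj v)).card ≤ 2) →
    ∃ χ : V → Fin 3, ∀ u ∈ W, ∀ w ∈ W, G.Adj u w → χ u ≠ χ w := by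
  intro n
  induction n with
  | zero =>
    intro W hW _
    rw [Nat.le_zero, Finset.card_eq_zero] at hW
    subst hW
    exact ⟨fun _ => 0, by simp⟩
  | succ n ih =>
    intro W hW hyp
    rcases W.eq_empty_or_nonempty with rfl | hne
    · exact ⟨fun _ => 0, by simp⟩
    obtain ⟨v, hv, hdv⟩ := hyp W le_rfl hne
    have herase : (W.erase v).card ≤ n := by
      have := Finset.card_erase_of_mem hv
      omega
    obtain ⟨χ, hχ⟩ := ih (W.erase v) herase
      (fun W' hW' hne' => hyp W' (hW'.trans (Finset.erase_subset _ _)) hne')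
    set N := (W.erase v).filter (G.Adj v) with hN
    have hNcard : N.card ≤ 2 := by
      refine le_trans (Finset.card_le_card ?_) hdv
      intro b hb
      simp only [hN, Finset.mem_filter, Finset.mem_erase] at hb
      exact Finset.mem_filter.mpr ⟨hb.1.2, hb.2⟩
    have himg : (N.image χ).card < Fintype.card (Fin 3) := by
      have := Finset.card_image_le (s := N) (f := χ)
      simp only [Fintype.card_fin]
      omega
    obtain ⟨c, hc⟩ : ∃ c : Fin 3, c ∉ N.image χ := by
      by_contra h
      push_neg at h
      have : (Finset.univ : Finset (Fin 3)) ⊆ N.image χ := fun c _ => h c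
      have := Finset.card_le_card this
      simp only [Finset.card_univ] at this
      omega
    refine ⟨Function.update χ v c, ?_⟩
    intro u hu w hw hadj
    by_cases huv : u = v <;> by_cases hwv : w = v
    · subst huv; subst hwv; exact absurd hadj (G.loopless.irrefl _)
    · subst huv
      rw [Function.update_self, Function.update_of_ne hwv]
      intro hcw
      exact hc (Finset.mem_image.mpr ⟨w, by simp [hN, Finset.mem_erase, hwv, hw, hadj], hcw.symm⟩)
    · subst hwv
      rw [Function.update_self, Function.update_of_ne huv]
      intro hcw
      exact hc (Finset.mem_image.mpr ⟨u, by simp [hN, Finset.mem_erase, huv, hu, hadj.symm], hcw⟩)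
    · rw [Function.update_of_ne huv, Function.update_of_ne hwv]
      exact hχ u (Finset.mem_erase.mpr ⟨huv, hu⟩) w (Finset.mem_erase.mpr ⟨hwv, hw⟩) hadj

/-- in an `(ℓ, ε)`-sparse graph with `ε < 1/2`, every vertex set of
size at most `ℓ` induces a `3`-colourable subgraph. -/
theorem stmt_0 {V : Type*} [Fintype V] (G : SimpleGraph V) (ℓ : ℕ) (ε : ℝ)
    (hε : ε < 1 / 2) (hsp : Sparse G ℓ ε) (U : Set V) (hU : U.ncard ≤ ℓ) :
    ∃ χ : V → Fin 3, ∀ u ∈ U, ∀ v ∈ U, G.Adj u v → χ u ≠ χ v := by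
  classical
  set W := (Set.toFinite U).toFinset with hWdef
  have hWU : ∀ x, x ∈ W ↔ x ∈ U := fun x => Set.Finite.mem_toFinset _
  have hWcard : W.card = U.ncard := (Set.ncard_eq_toFinset_card U (Set.toFinite U)).symm
  obtain ⟨χ, hχ⟩ := greedy G W.card W le_rfl (by
    intro W' hW' hne'
    apply exists_low_deg G W' hne' ε hε
    have hcard' : (W' : Set V).ncard ≤ ℓ := by
      rw [Set.ncard_coe_finset]
      exact le_trans (Finset.card_le_card hW') (hWcard ▸ hU)
    have := hsp (↑W') hcard'
    rwa [Set.ncard_coe_finset] at this)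
  exact ⟨χ, fun u hu w hw hadj => hχ u ((hWU u).mpr hu) w ((hWU w).mpr hw) hadj⟩
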